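/- arXiv:2511.21738 — 3 statements merged into one kernel-verified Lean document; each statement's English description precedes it below -/
import Mathlib

section
/- There exists a constant c > 0 such that for all sufficiently large n, the number of Boolean functions f : {0,1}^n → {0,1} that are computable by some Boolean circuit on n inputs over the basis {AND, OR, NOT} with at most c·2^n/n gates is less than (1/2)·2^{2^n}. In particular, at least half of all Boolean functions on n variables require circuits of size greater than c·2^n/n. -/
/-- A wire in a straight-line Boolean circuit: either one of the `n` input
variables or the output of one of the `k` previous gates. -/
inductive Wire (n k : ℕ) : Type where
  | input : Fin n → Wire n k
  | gate  : Fin k → Wire n k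

/-- A gate over the basis {AND, OR, NOT}, with inputs taken from wires. -/
inductive GateDesc (n k : ℕ) : Type where
  | not : Wire n k → GateDesc n k
  | and : Wire n k → Wire n k → GateDesc n k
  | or  : Wire n k → Wire n k → GateDesc n k

/-- A Boolean circuit on `n` inputs over {AND, OR, NOT}: a straight-line
program in which gate `i` may reference the inputs and gates `j < i`.
Its size is the number of gates. -/
structure Circuit (n : ℕ) : Type where
  size : ℕ
  gates : (i : Fin size) → GateDesc n i

def Wire.eval {n k : ℕ} (x : Fin n → Bool) (g : Fin k → Bool) : Wire n k → Bool
  | .input j => x j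
  | .gate j => g j

def GateDesc.eval {n k : ℕ} (x : Fin n → Bool) (g : Fin k → Bool) : GateDesc n k → Bool
  | .not w => !(w.eval x g)
  | .and w₁ w₂ => w₁.eval x g && w₂.eval x g
  | .or w₁ w₂ => w₁.eval x g || w₂.eval x g

/-- Value of gate `i` of the circuit on input `x`. -/
def Circuit.evalGate {n : ℕ} (c : Circuit n) (x : Fin n → Bool) : (i : ℕ) → i < c.size → Bool
  | i, hi => (c.gates ⟨i, hi⟩).eval x (fun j => c.evalGate x j (j.isLt.trans hi))

/-- The circuit `c` computes the Boolean function `f` if it has at least one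
gate and the value of the last gate on every input `x` equals `f x`. -/
def Circuit.Computes {n : ℕ} (c : Circuit n) (f : (Fin n → Bool) → Bool) : Prop :=
  ∃ h : 0 < c.size, ∀ x : Fin n → Bool,
    c.evalGate x (c.size - 1) (Nat.sub_lt h Nat.one_pos) = f x

def wireEquiv (n k : ℕ) : Wire n k ≃ (Fin n ⊕ Fin k) where
  toFun w := match w with | .input j => .inl j | .gate j => .inr j
  invFun w := match w with | .inl j => .input j | .inr j => .gate j
  left_inv w := by cases w <;> rfl
  right_inv w := by cases w <;> rfl

def gateEquiv (n k : ℕ) :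
    GateDesc n k ≃ (Wire n k ⊕ (Wire n k × Wire n k ⊕ Wire n k × Wire n k)) where
  toFun g := match g with
    | .not w => .inl w
    | .and a b => .inr (.inl (a, b))
    | .or a b => .inr (.inr (a, b))
  invFun g := match g with
    | .inl w => .not w
    | .inr (.inl (a, b)) => .and a b
    | .inr (.inr (a, b)) => .or a b
  left_inv g := by cases g <;> rfl
  right_inv g := by rcases g with w | (⟨a,b⟩|⟨a,b⟩) <;> rfl

noncomputable instance (n k : ℕ) : Fintype (Wire n k) :=
  Fintype.ofEquiv _ (wireEquiv n k).symm

noncomputable instance (n k : ℕ) : Fintype (GateDesc n k) :=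
  Fintype.ofEquiv _ (gateEquiv n k).symm

lemma card_wire (n k : ℕ) : Fintype.card (Wire n k) = n + k := by
  rw [Fintype.card_congr (wireEquiv n k)]; simp

lemma card_gate (n k : ℕ) :
    Fintype.card (GateDesc n k) = (n + k) + ((n+k) * (n+k) + (n+k) * (n+k)) := by
  rw [Fintype.card_congr (gateEquiv n k)]
  simp [card_wire]

lemma card_gate_le (n k s : ℕ) (hk : k ≤ s) :
    Fintype.card (GateDesc n k) ≤ 3 * (n + s) * (n + s) := by
  rw [card_gate]
  rcases Nat.eq_zero_or_pos (n + s) with h | h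
  · have hn : n = 0 := by omega
    have hk0 : k = 0 := by omega
    simp [hn, hk0, h]
  · have h1 : n + k ≤ n + s := by omega
    nlinarith

lemma aux_pow (k : ℕ) (h : 4 ≤ k) : k + 6 ≤ 2 ^ k := by
  induction k with
  | zero => omega
  | succ k ih =>
    rcases Nat.lt_or_ge k 4 with h' | h'
    · have hk : k = 3 := by omega
      subst hk; norm_num
    · have := ih h'
      have : 2 ^ (k+1) = 2 * 2 ^ k := by rw [pow_succ]; ring
      omega

lemma arith_main (n : ℕ) (hn : 16 ≤ n) :
    (2 ^ n / (16 * n) + 1) *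
      (3 * (n + 2 ^ n / (16 * n)) * (n + 2 ^ n / (16 * n))) ^ (2 ^ n / (16 * n))
      ≤ 2 ^ (2 ^ n - 2) := by
  set s := 2 ^ n / (16 * n) with hs
  have hn2 : n < 2 ^ n := Nat.lt_two_pow_self
  have hsle : s ≤ 2 ^ n := Nat.div_le_self _ _
  have hslt : s < 2 ^ n := Nat.div_lt_self (Nat.pow_pos (n := n) (by norm_num)) (by omega)
  -- bound on B
  have h1 : n + s ≤ 2 ^ (n + 1) := by
    have : 2 ^ (n+1) = 2 * 2 ^ n := by rw [pow_succ]; ring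
    omega
  have hB : 3 * (n + s) * (n + s) ≤ 2 ^ (3 * n) := by
    calc 3 * (n + s) * (n + s) ≤ 4 * 2 ^ (n+1) * 2 ^ (n+1) := by nlinarith
      _ = 2 ^ (2 * n + 4) := by ring
      _ ≤ 2 ^ (3 * n) := Nat.pow_le_pow_right (by norm_num) (by omega)
  have hBs : (3 * (n + s) * (n + s)) ^ s ≤ 2 ^ (3 * (n * s)) := by
    calc (3 * (n + s) * (n + s)) ^ s ≤ (2 ^ (3 * n)) ^ s := Nat.pow_le_pow_left hB s
      _ = 2 ^ (3 * (n * s)) := by rw [← pow_mul, mul_assoc]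
  -- bound on n * s
  have hns : n * s ≤ 2 ^ (n - 4) := by
    have h2 : s = 2 ^ n / 16 / n := by rw [hs, Nat.div_div_eq_div_mul]
    have h3 : 2 ^ n / 16 / n * n ≤ 2 ^ n / 16 := Nat.div_mul_le_self _ _
    have h4 : 2 ^ n / 16 = 2 ^ (n - 4) := by
      rw [show (16:ℕ) = 2 ^ 4 from rfl, Nat.pow_div (by omega) (by norm_num)]
    rw [h2, mul_comm]
    omega
  have hn4 : n + 2 ≤ 2 ^ (n - 4) := by
    have := aux_pow (n - 4) (by omega)
    omega
  have hexp : n + 3 * (n * s) ≤ 2 ^ n - 2 := by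
    have h5 : 2 ^ (n - 4) * 2 ^ 4 = 2 ^ n := by rw [← pow_add]; congr 1; omega
    omega
  calc (s + 1) * (3 * (n + s) * (n + s)) ^ s
      ≤ 2 ^ n * 2 ^ (3 * (n * s)) := Nat.mul_le_mul (by omega) hBs
    _ = 2 ^ (n + 3 * (n * s)) := (pow_add 2 _ _).symm
    _ ≤ 2 ^ (2 ^ n - 2) := Nat.pow_le_pow_right (by norm_num) hexp

/-- Evaluation map from bounded-size circuit descriptions to Boolean functions. -/
noncomputable def phi (n s : ℕ)
    (p : Σ k : Fin (s + 1), (i : Fin (k : ℕ)) → GateDesc n i) :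
    (Fin n → Bool) → Bool :=
  fun x =>
    if h : 0 < (p.1 : ℕ) then
      Circuit.evalGate ⟨(p.1 : ℕ), p.2⟩ x ((p.1 : ℕ) - 1) (Nat.sub_lt h Nat.one_pos)
    else false

lemma card_T_le (n s : ℕ) (hn : 1 ≤ n) :
    Fintype.card (Σ k : Fin (s + 1), (i : Fin (k : ℕ)) → GateDesc n i)
      ≤ (s + 1) * (3 * (n + s) * (n + s)) ^ s := by
  have hB : 1 ≤ 3 * (n + s) * (n + s) := by nlinarith
  rw [Fintype.card_sigma]
  calc ∑ k : Fin (s + 1), Fintype.card ((i : Fin (k : ℕ)) → GateDesc n i)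
      ≤ ∑ _k : Fin (s + 1), (3 * (n + s) * (n + s)) ^ s := by
        refine Finset.sum_le_sum fun k _ => ?_
        rw [Fintype.card_pi]
        calc ∏ i : Fin (k : ℕ), Fintype.card (GateDesc n (i : ℕ))
            ≤ ∏ _i : Fin (k : ℕ), 3 * (n + s) * (n + s) := by
              refine Finset.prod_le_prod' fun i _ => ?_
              exact card_gate_le n i s (by omega)
          _ = (3 * (n + s) * (n + s)) ^ (k : ℕ) := by
              simp [Finset.prod_const]
          _ ≤ (3 * (n + s) * (n + s)) ^ s := Nat.pow_le_pow_right hB (by omega)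
    _ = (s + 1) * (3 * (n + s) * (n + s)) ^ s := by
        simp [Finset.sum_const, mul_comm]

theorem stmt_0 :
    ∃ c : ℝ, 0 < c ∧ ∃ N : ℕ, ∀ n : ℕ, N ≤ n →
      (Nat.card {f : (Fin n → Bool) → Bool |
          ∃ C : Circuit n, (C.size : ℝ) ≤ c * 2 ^ n / n ∧ C.Computes f} : ℝ)
        < (1 / 2) * 2 ^ (2 ^ n) ∧
      (1 / 2) * (2 : ℝ) ^ (2 ^ n) ≤
        (Nat.card {f : (Fin n → Bool) → Bool |
          ∀ C : Circuit n, C.Computes f → c * 2 ^ n / n < (C.size : ℝ)} : ℝ) := by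
  refine ⟨1/16, by norm_num, 16, fun n hn => ?_⟩
  have hn0 : 0 < n := by omega
  set s := 2 ^ n / (16 * n) with hsdef
  set S1 : Set ((Fin n → Bool) → Bool) :=
    {f | ∃ C : Circuit n, (C.size : ℝ) ≤ 1/16 * 2 ^ n / n ∧ C.Computes f} with hS1
  set S2 : Set ((Fin n → Bool) → Bool) :=
    {f | ∀ C : Circuit n, C.Computes f → 1/16 * 2 ^ n / n < (C.size : ℝ)} with hS2
  -- size bound to nat
  have hsize : ∀ C : Circuit n, (C.size : ℝ) ≤ 1/16 * 2 ^ n / n → C.size ≤ s := by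
    intro C hC
    have heq : (1/16 : ℝ) * 2 ^ n / n = ((2 ^ n : ℕ) : ℝ) / ((16 * n : ℕ) : ℝ) := by
      have : (n : ℝ) ≠ 0 := Nat.cast_ne_zero.mpr (by omega)
      push_cast
      field_simp
    rw [heq] at hC
    have h2 := Nat.le_floor hC
    rwa [Nat.floor_div_natCast, Nat.floor_natCast] at h2
  have hsub : S1 ⊆ Set.range (phi n s) := by
    rintro f ⟨C, hC, hcomp⟩
    have hle : C.size ≤ s := hsize C hC
    obtain ⟨hpos, hval⟩ := hcomp
    refine ⟨⟨⟨C.size, by omega⟩, C.gates⟩, funext fun x => ?_⟩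
    unfold phi
    rw [dif_pos hpos]
    exact hval x
  have hT : Nat.card S1 ≤ 2 ^ (2 ^ n - 2) := by
    have h1 : Nat.card S1 ≤ Nat.card (Set.range (phi n s)) :=
      Nat.card_mono (Set.toFinite _) hsub
    have h2 : Nat.card (Set.range (phi n s)) ≤
        Nat.card (Σ k : Fin (s + 1), (i : Fin (k : ℕ)) → GateDesc n i) :=
      Finite.card_range_le _
    have h3 : Nat.card (Σ k : Fin (s + 1), (i : Fin (k : ℕ)) → GateDesc n i)
        = Fintype.card (Σ k : Fin (s + 1), (i : Fin (k : ℕ)) → GateDesc n i) :=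
      Nat.card_eq_fintype_card
    have h4 := card_T_le n s hn0
    have h5 := arith_main n hn
    rw [← hsdef] at h5
    omega
  have hcompl : S2 = S1ᶜ := by
    ext f
    simp only [hS1, hS2, Set.mem_compl_iff, Set.mem_setOf_eq, not_exists, not_and]
    constructor
    · intro h C hle hcomp
      exact absurd (h C hcomp) (not_lt.mpr hle)
    · intro h C hcomp
      exact not_le.mp (fun hle => h C hle hcomp)
  have htotal : Nat.card S1 + Nat.card S2 = 2 ^ 2 ^ n := by
    rw [hcompl, Nat.card_coe_set_eq, Nat.card_coe_set_eq,
        Set.ncard_add_ncard_compl, Nat.card_eq_fintype_card]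
    simp [Fintype.card_fun]
  have e2 : 2 ≤ 2 ^ n := by
    calc 2 = 2 ^ 1 := rfl
    _ ≤ 2 ^ n := Nat.pow_le_pow_right (by norm_num) (by omega)
  have h4 : 2 ^ 2 ^ n = 4 * 2 ^ (2 ^ n - 2) := by
    rw [show (4:ℕ) = 2 ^ 2 from rfl, ← pow_add]
    congr 1
    omega
  have hpos2 : 1 ≤ 2 ^ (2 ^ n - 2) := Nat.one_le_two_pow
  have hlt : 2 * Nat.card S1 < 2 ^ 2 ^ n := by omega
  have hge : 2 ^ 2 ^ n ≤ 2 * Nat.card S2 := by omega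
  constructor
  · have h6 := (Nat.cast_lt (α := ℝ)).mpr hlt
    push_cast at h6
    linarith
  · have h6 := (Nat.cast_le (α := ℝ)).mpr hge
    push_cast at h6
    linarith
end

section
/- Let S be a finite set with |S| = N ≥ 1 and let c be an injective map from S into the set of binary strings. Then the total length satisfies Σ_{x ∈ S} length(c(x)) ≥ N · (log₂(N+1) − 2); equivalently, the average code length under the uniform distribution on S is at least log₂(N+1) − 2. -/
private def encBL : List Bool → ℕ
  | [] => 1
  | b :: l => 2 * encBL l + b.toNat

private lemma encBL_pos (l : List Bool) : 1 ≤ encBL l := by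
  cases l with
  | nil => simp [encBL]
  | cons b l => have := encBL_pos l; simp [encBL]; omega

private lemma encBL_lt (l : List Bool) : encBL l < 2 ^ (l.length + 1) := by
  induction l with
  | nil => simp [encBL]
  | cons b l ih =>
    have hb : b.toNat ≤ 1 := by cases b <;> simp
    simp only [encBL, List.length_cons, pow_succ]
    omega

private lemma encBL_inj : Function.Injective encBL := by
  intro l1
  induction l1 with
  | nil =>
    intro l2 h
    cases l2 with
    | nil => rfl
    | cons b l =>
      have := encBL_pos l
      have hb : b.toNat ≤ 1 := by cases b <;> simp
      simp only [encBL] at h; omega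
  | cons a l ih =>
    intro l2 h
    cases l2 with
    | nil =>
      have := encBL_pos l
      have ha : a.toNat ≤ 1 := by cases a <;> simp
      simp only [encBL] at h; omega
    | cons b l2 =>
      simp only [encBL] at h
      have ha : a.toNat ≤ 1 := by cases a <;> simp
      have hb : b.toNat ≤ 1 := by cases b <;> simp
      have h1 : a.toNat = b.toNat ∧ encBL l = encBL l2 := by omega
      have hab : a = b := by cases a <;> cases b <;> simp_all
      rw [hab, ih h1.2]


private lemma chordBL (u : ℝ) (h0 : 0 ≤ u) (h1 : u ≤ 1) : (2:ℝ) ^ u ≤ 1 + u := by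
  have h := convexOn_exp.2 (Set.mem_univ (0:ℝ)) (Set.mem_univ (Real.log 2))
    (by linarith : (0:ℝ) ≤ 1 - u) h0 (by ring)
  simp only [smul_eq_mul, mul_zero, zero_add, Real.exp_zero, Real.exp_log two_pos] at h
  rw [Real.rpow_def_of_pos two_pos]
  calc Real.exp (Real.log 2 * u) = Real.exp (u * Real.log 2) := by ring_nf
    _ ≤ (1-u) * 1 + u * 2 := h
    _ = 1 + u := by ring

private lemma keyBL (M : ℝ) (K : ℕ) (hM : 1 ≤ M) (h1 : (2:ℝ) ^ K ≤ M) (h2 : M ≤ 2 ^ (K+1)) :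
    (M - 1) * (Real.logb 2 M - 2) ≤ M * K - 2 ^ (K+1) + 2 := by
  have hMpos : (0:ℝ) < M := by linarith
  set s : ℝ := Real.logb 2 M - K with hs
  have hlogK : Real.logb 2 ((2:ℝ) ^ K) = K := by
    rw [Real.logb_pow, Real.logb_self_eq_one (by norm_num)]; ring
  have hs0 : 0 ≤ s := by
    have := Real.logb_le_logb_of_le (b := 2) (by norm_num) (by positivity) h1
    rw [hlogK] at this; simp [hs]; linarith
  have hs1 : s ≤ 1 := by
    have := Real.logb_le_logb_of_le (b := 2) (by norm_num) hMpos h2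
    have h2' : Real.logb 2 ((2:ℝ) ^ (K+1)) = K + 1 := by
      rw [Real.logb_pow, Real.logb_self_eq_one (by norm_num)]; push_cast; ring
    rw [h2'] at this; simp [hs]; linarith
  have hMeq : M = 2 ^ (K:ℝ) * 2 ^ s := by
    rw [← Real.rpow_add two_pos, hs]
    have : (K:ℝ) + (Real.logb 2 M - K) = Real.logb 2 M := by ring
    rw [this, Real.rpow_logb two_pos (by norm_num) hMpos]
  have hrpK : (2:ℝ) ^ (K:ℝ) = 2 ^ K := by rw [Real.rpow_natCast]
  -- 2 ≤ (2 - s) * 2^s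
  have hchord : (2:ℝ) ^ (1 - s) ≤ 2 - s := by
    have := chordBL (1 - s) (by linarith) (by linarith); linarith
  have hprod : (2:ℝ) ^ (1-s) * 2 ^ s = 2 := by
    rw [← Real.rpow_add two_pos]; norm_num
  have hspos : (0:ℝ) < 2 ^ s := Real.rpow_pos_of_pos two_pos s
  have h2s : (2:ℝ) ≤ (2 - s) * 2 ^ s := by
    calc (2:ℝ) = 2 ^ (1-s) * 2 ^ s := hprod.symm
      _ ≤ (2 - s) * 2 ^ s := by nlinarith
  -- 2^(K+1) ≤ M * (2 - s)
  have hmain : (2:ℝ) ^ (K+1) ≤ M * (2 - s) := by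
    have : M * (2 - s) = 2 ^ (K:ℝ) * ((2 - s) * 2 ^ s) := by rw [hMeq]; ring
    rw [this, hrpK, pow_succ]
    have hpK : (0:ℝ) < 2 ^ K := by positivity
    nlinarith
  have hlM : Real.logb 2 M = K + s := by simp [hs]
  have hKnn : (0:ℝ) ≤ (K:ℝ) := Nat.cast_nonneg K
  rw [hlM]
  nlinarith

private lemma encBL_card {S : Type*} [Fintype S] (N : ℕ)
    (hcard : Fintype.card S = N) (c : S → List Bool) (hc : Function.Injective c)
    (K : ℕ) :
    (N : ℝ) * K + K - 2 ^ (K+1) + 2 ≤ ∑ x : S, ((c x).length : ℝ) := by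

  classical
  -- counting: few short strings
  have count_le : ∀ t : ℕ,
      (Finset.univ.filter fun x : S => (c x).length ≤ t).card + 1 ≤ 2 ^ (t+1) := by
    intro t
    have hsub : (Finset.univ.filter fun x : S => (c x).length ≤ t).card
        ≤ (Finset.Ico 1 (2 ^ (t+1))).card := by
      apply Finset.card_le_card_of_injOn (fun x => encBL (c x))
      · intro x hx
        simp only [Finset.mem_coe, Finset.mem_filter] at hx
        simp only [Finset.mem_coe, Finset.mem_Ico]
        refine ⟨encBL_pos _, lt_of_lt_of_le (encBL_lt _) ?_⟩
        exact Nat.pow_le_pow_right (by norm_num) (by omega)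
      · intro x _ y _ h
        exact hc (encBL_inj h)
    rw [Nat.card_Ico] at hsub
    have : 1 ≤ 2 ^ (t+1) := Nat.one_le_two_pow
    omega
  -- double counting
  have swap : ∑ t ∈ Finset.range K, (Finset.univ.filter fun x : S => t < (c x).length).card
      = ∑ x : S, ((Finset.range K).filter fun t => t < (c x).length).card := by
    simp_rw [Finset.card_filter]
    exact Finset.sum_comm
  have step1 : ∑ t ∈ Finset.range K, (Finset.univ.filter fun x : S => t < (c x).length).card
      ≤ ∑ x : S, (c x).length := by
    rw [swap]
    apply Finset.sum_le_sum
    intro x _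
    calc ((Finset.range K).filter fun t => t < (c x).length).card
        ≤ (Finset.range (c x).length).card := by
          apply Finset.card_le_card
          intro t ht
          simp only [Finset.mem_filter, Finset.mem_range] at *
          exact ht.2
      _ = (c x).length := Finset.card_range _
  -- lower bound each term in ℝ
  have step2 : ∀ t ∈ Finset.range K, (N : ℝ) + 1 - 2 ^ (t+1)
      ≤ ((Finset.univ.filter fun x : S => t < (c x).length).card : ℝ) := by
    intro t _
    have hpart := Finset.card_filter_add_card_filter_not
      (s := (Finset.univ : Finset S)) (p := fun x => (c x).length ≤ t)
    simp only [not_le, Finset.card_univ, hcard] at hpart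
    have := count_le t
    have hcast : ((Finset.univ.filter fun x : S => (c x).length ≤ t).card : ℝ) + 1 ≤ 2 ^ (t+1) := by
      exact_mod_cast this
    have hN' : ((Finset.univ.filter fun x : S => t < (c x).length).card : ℝ)
        = N - (Finset.univ.filter fun x : S => (c x).length ≤ t).card := by
      have : ((Finset.univ.filter fun x : S => (c x).length ≤ t).card : ℝ)
          + ((Finset.univ.filter fun x : S => t < (c x).length).card : ℝ) = N := by
        exact_mod_cast hpart
      linarith
    rw [hN']; linarith
  have step3 : ∑ t ∈ Finset.range K, ((N : ℝ) + 1 - 2 ^ (t+1))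
      ≤ ∑ x : S, ((c x).length : ℝ) := by
    calc ∑ t ∈ Finset.range K, ((N : ℝ) + 1 - 2 ^ (t+1))
        ≤ ∑ t ∈ Finset.range K,
            ((Finset.univ.filter fun x : S => t < (c x).length).card : ℝ) :=
          Finset.sum_le_sum step2
      _ = ((∑ t ∈ Finset.range K,
            (Finset.univ.filter fun x : S => t < (c x).length).card : ℕ) : ℝ) := by
          push_cast; ring
      _ ≤ ((∑ x : S, (c x).length : ℕ) : ℝ) := by exact_mod_cast step1
      _ = ∑ x : S, ((c x).length : ℝ) := by push_cast; ring
  have geom : ∑ t ∈ Finset.range K, ((2:ℝ) ^ (t+1)) = 2 ^ (K+1) - 2 := by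
    have : ∑ t ∈ Finset.range K, ((2:ℝ) ^ (t+1)) = 2 * ∑ t ∈ Finset.range K, (2:ℝ) ^ t := by
      rw [Finset.mul_sum]; apply Finset.sum_congr rfl; intro t _; ring
    rw [this, geom_sum_eq (by norm_num) K]
    rw [pow_succ]; ring
  have : ∑ t ∈ Finset.range K, ((N : ℝ) + 1 - 2 ^ (t+1))
      = (N : ℝ) * K + K - 2 ^ (K+1) + 2 := by
    rw [Finset.sum_sub_distrib, geom, Finset.sum_const, Finset.card_range]
    push_cast; ring
  linarith

theorem stmt_6 {S : Type*} [Fintype S] (N : ℕ) (hN : 1 ≤ N)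
    (hcard : Fintype.card S = N) (c : S → List Bool) (hc : Function.Injective c) :
    (N : ℝ) * (Real.logb 2 (N + 1) - 2) ≤ ∑ x : S, ((c x).length : ℝ) := by
  classical
  set K := Nat.log 2 (N+1) with hK
  have h1 : 2 ^ K ≤ N + 1 := Nat.pow_log_le_self 2 (by omega)
  have h2 : N + 1 < 2 ^ (K+1) := Nat.lt_pow_succ_log_self (by norm_num) _
  have h1' : (2:ℝ) ^ K ≤ (N:ℝ) + 1 := by exact_mod_cast h1
  have h2' : (N:ℝ) + 1 ≤ 2 ^ (K+1) := by
    have : ((N:ℝ) + 1) < 2 ^ (K+1) := by exact_mod_cast h2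
    linarith
  have hkey := keyBL ((N:ℝ) + 1) K (by push_cast; linarith [hN]) h1' h2'
  have hcount := encBL_card N hcard c hc K
  have : ((N:ℝ) + 1 - 1) * (Real.logb 2 ((N:ℝ)+1) - 2) = (N:ℝ) * (Real.logb 2 (N+1) - 2) := by
    push_cast; ring
  rw [this] at hkey
  have : ((N:ℝ)+1) * K - 2 ^ (K+1) + 2 = (N : ℝ) * K + K - 2 ^ (K+1) + 2 := by ring
  rw [this] at hkey
  linarith
end

section
/- Lupanov's upper bound: for every real ε > 0 there exists a natural number N such that for all n ≥ N, every Boolean function f : {0,1}^n → {0,1} is computable by a Boolean circuit on n inputs over the basis {AND, OR, NOT} with at most (1 + ε)·2^n/n gates. -/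
variable {n : ℕ}
def Wire.castLE {n k k' : ℕ} (h : k ≤ k') : Wire n k → Wire n k'
  | .input j => .input j
  | .gate j => .gate (Fin.castLE h j)

def GateDesc.castLE {n k k' : ℕ} (h : k ≤ k') : GateDesc n k → GateDesc n k'
  | .not w => .not (w.castLE h)
  | .and w₁ w₂ => .and (w₁.castLE h) (w₂.castLE h)
  | .or w₁ w₂ => .or (w₁.castLE h) (w₂.castLE h)

lemma Wire.eval_castLE {n k k' : ℕ} (h : k ≤ k') (x : Fin n → Bool) (g : Fin k' → Bool)
    (w : Wire n k) : (w.castLE h).eval x g = w.eval x (fun j => g (Fin.castLE h j)) := by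
  cases w <;> rfl

lemma GateDesc.eval_castLE {n k k' : ℕ} (h : k ≤ k') (x : Fin n → Bool) (g : Fin k' → Bool)
    (d : GateDesc n k) :
    (d.castLE h).eval x g = d.eval x (fun j => g (Fin.castLE h j)) := by
  cases d <;> simp [GateDesc.castLE, GateDesc.eval, Wire.eval_castLE]

lemma GateDesc.eval_congr {n k : ℕ} (x : Fin n → Bool) {g g' : Fin k → Bool}
    (h : ∀ j, g j = g' j) (d : GateDesc n k) : d.eval x g = d.eval x g' := by
  have : g = g' := funext h
  rw [this]

def Circuit.snoc (c : Circuit n) (d : GateDesc n c.size) : Circuit n where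
  size := c.size + 1
  gates := fun i =>
    if h : (i : ℕ) < c.size then c.gates ⟨i, h⟩
    else GateDesc.castLE (Nat.le_of_not_lt h) d

lemma evalGate_snoc_lt (c : Circuit n) (d : GateDesc n c.size) (x : Fin n → Bool) :
    ∀ (i : ℕ) (h2 : i < c.size) (h : i < (c.snoc d).size),
      (c.snoc d).evalGate x i h = c.evalGate x i h2 := by
  intro i
  induction i using Nat.strong_induction_on with
  | _ i ih =>
    intro h2 h
    rw [Circuit.evalGate.eq_def, Circuit.evalGate.eq_def]
    dsimp only
    have hg : (c.snoc d).gates ⟨i, h⟩ = c.gates ⟨i, h2⟩ := by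
      simp [Circuit.snoc, h2]
    rw [hg]
    apply GateDesc.eval_congr
    intro j
    exact ih j j.isLt (j.isLt.trans h2) _

lemma evalGate_snoc_last (c : Circuit n) (d : GateDesc n c.size) (x : Fin n → Bool)
    (h : c.size < (c.snoc d).size) :
    (c.snoc d).evalGate x c.size h = d.eval x (fun j => c.evalGate x j j.isLt) := by
  rw [Circuit.evalGate.eq_def]
  dsimp only
  have hg : (c.snoc d).gates ⟨c.size, h⟩ = GateDesc.castLE (le_refl _) d := by
    simp [Circuit.snoc]
  rw [hg, GateDesc.eval_castLE]
  apply GateDesc.eval_congr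
  intro j
  exact evalGate_snoc_lt c d x j j.isLt _


def Avail {n : ℕ} (c : Circuit n) (φ : (Fin n → Bool) → Bool) : Prop :=
  (∃ j : Fin n, ∀ x, x j = φ x) ∨
    ∃ i : ℕ, ∃ h : i < c.size, ∀ x, c.evalGate x i h = φ x

def Extends {n : ℕ} (c c' : Circuit n) : Prop :=
  c.size ≤ c'.size ∧ ∀ (x : Fin n → Bool) (i : ℕ) (h : i < c.size) (h' : i < c'.size),
    c'.evalGate x i h' = c.evalGate x i h

lemma Extends.refl (c : Circuit n) : Extends c c := ⟨le_refl _, fun _ _ _ _ => rfl⟩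

lemma Extends.trans {c₁ c₂ c₃ : Circuit n} (h1 : Extends c₁ c₂) (h2 : Extends c₂ c₃) :
    Extends c₁ c₃ :=
  ⟨h1.1.trans h2.1, fun x i h h' => ((h2.2 x i (h.trans_le h1.1) h').trans
    (h1.2 x i h _))⟩

lemma Avail.mono {c c' : Circuit n} {φ} (h : Avail c φ) (he : Extends c c') : Avail c' φ := by
  rcases h with h | ⟨i, hi, hval⟩
  · exact Or.inl h
  · exact Or.inr ⟨i, hi.trans_le he.1, fun x => (he.2 x i hi _).trans (hval x)⟩

lemma Avail.congr {c : Circuit n} {φ ψ} (h : Avail c φ) (he : ∀ x, φ x = ψ x) :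
    Avail c ψ := by
  rcases h with ⟨j, hj⟩ | ⟨i, hi, hval⟩
  · exact Or.inl ⟨j, fun x => (hj x).trans (he x)⟩
  · exact Or.inr ⟨i, hi, fun x => (hval x).trans (he x)⟩

lemma Avail.wire {c : Circuit n} {φ} (h : Avail c φ) :
    ∃ w : Wire n c.size, ∀ x, w.eval x (fun j => c.evalGate x j j.isLt) = φ x := by
  rcases h with ⟨j, hj⟩ | ⟨i, hi, hval⟩
  · exact ⟨.input j, hj⟩
  · exact ⟨.gate ⟨i, hi⟩, hval⟩

lemma extends_snoc (c : Circuit n) (d : GateDesc n c.size) : Extends c (c.snoc d) :=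
  ⟨Nat.le_succ _, fun x i h h' => evalGate_snoc_lt c d x i h h'⟩

lemma avail_input (c : Circuit n) (j : Fin n) : Avail c (fun x => x j) :=
  Or.inl ⟨j, fun _ => rfl⟩

lemma snoc_spec (c : Circuit n) (d : GateDesc n c.size) :
    Extends c (c.snoc d) ∧ (c.snoc d).size = c.size + 1 ∧
      Avail (c.snoc d) (fun x => d.eval x (fun j => c.evalGate x j j.isLt)) := by
  refine ⟨extends_snoc c d, rfl, Or.inr ⟨c.size, Nat.lt_succ_self _, fun x => ?_⟩⟩
  exact evalGate_snoc_last c d x _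

lemma existsNot {c : Circuit n} {φ} (h : Avail c φ) :
    ∃ c', Extends c c' ∧ c'.size = c.size + 1 ∧ Avail c' (fun x => !(φ x)) := by
  obtain ⟨w, hw⟩ := h.wire
  obtain ⟨he, hs, ha⟩ := snoc_spec c (.not w)
  exact ⟨_, he, hs, ha.congr (fun x => by simp [GateDesc.eval, hw x])⟩

lemma existsAnd {c : Circuit n} {φ ψ} (h1 : Avail c φ) (h2 : Avail c ψ) :
    ∃ c', Extends c c' ∧ c'.size = c.size + 1 ∧ Avail c' (fun x => φ x && ψ x) := by
  obtain ⟨w1, hw1⟩ := h1.wire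
  obtain ⟨w2, hw2⟩ := h2.wire
  obtain ⟨he, hs, ha⟩ := snoc_spec c (.and w1 w2)
  exact ⟨_, he, hs, ha.congr (fun x => by simp [GateDesc.eval, hw1 x, hw2 x])⟩

lemma existsOr {c : Circuit n} {φ ψ} (h1 : Avail c φ) (h2 : Avail c ψ) :
    ∃ c', Extends c c' ∧ c'.size = c.size + 1 ∧ Avail c' (fun x => φ x || ψ x) := by
  obtain ⟨w1, hw1⟩ := h1.wire
  obtain ⟨w2, hw2⟩ := h2.wire
  obtain ⟨he, hs, ha⟩ := snoc_spec c (.or w1 w2)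
  exact ⟨_, he, hs, ha.congr (fun x => by simp [GateDesc.eval, hw1 x, hw2 x])⟩

lemma existsConst (hn : 0 < n) (c : Circuit n) (b : Bool) :
    ∃ c', Extends c c' ∧ c'.size ≤ c.size + 2 ∧ Avail c' (fun _ => b) := by
  have h0 : Avail c (fun x => x ⟨0, hn⟩) := avail_input c _
  obtain ⟨c1, he1, hs1, ha1⟩ := existsNot h0
  have h0' : Avail c1 (fun x => x ⟨0, hn⟩) := (avail_input c _).mono he1
  cases b with
  | false =>
    obtain ⟨c2, he2, hs2, ha2⟩ := existsAnd h0' ha1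
    exact ⟨c2, he1.trans he2, by omega, ha2.congr (fun x => by simp)⟩
  | true =>
    obtain ⟨c2, he2, hs2, ha2⟩ := existsOr h0' ha1
    exact ⟨c2, he1.trans he2, by omega, ha2.congr (fun x => by simp)⟩

lemma existsBigOr {c : Circuit n} (L : List ((Fin n → Bool) → Bool))
    (h0 : Avail c (fun _ => false)) (hL : ∀ φ ∈ L, Avail c φ) :
    ∃ c', Extends c c' ∧ c'.size ≤ c.size + L.length ∧
      Avail c' (fun x => L.any (fun φ => φ x)) := by
  induction L generalizing c with
  | nil => exact ⟨c, Extends.refl c, by simp, h0.congr (fun x => by simp)⟩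
  | cons φ L ih =>
    obtain ⟨c1, he1, hs1, ha1⟩ := ih h0 (fun ψ hψ => hL ψ (List.mem_cons_of_mem _ hψ))
    have hφ : Avail c1 φ := (hL φ List.mem_cons_self).mono he1
    obtain ⟨c2, he2, hs2, ha2⟩ := existsOr hφ ha1
    refine ⟨c2, he1.trans he2, by simp at hs1 ⊢; omega, ha2.congr (fun x => by simp)⟩

lemma existsBigAnd {c : Circuit n} (L : List ((Fin n → Bool) → Bool))
    (h1 : Avail c (fun _ => true)) (hL : ∀ φ ∈ L, Avail c φ) :
    ∃ c', Extends c c' ∧ c'.size ≤ c.size + L.length ∧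
      Avail c' (fun x => L.all (fun φ => φ x)) := by
  induction L generalizing c with
  | nil => exact ⟨c, Extends.refl c, by simp, h1.congr (fun x => by simp)⟩
  | cons φ L ih =>
    obtain ⟨c1, he1, hs1, ha1⟩ := ih h1 (fun ψ hψ => hL ψ (List.mem_cons_of_mem _ hψ))
    have hφ : Avail c1 φ := (hL φ List.mem_cons_self).mono he1
    obtain ⟨c2, he2, hs2, ha2⟩ := existsAnd hφ ha1
    refine ⟨c2, he1.trans he2, by simp at hs1 ⊢; omega, ha2.congr (fun x => by simp)⟩

/-- Sequentially build a list of targets, each buildable from any extension of `c`. -/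
lemma build_seq {α : Type*} (c : Circuit n) (L : List α) (F : α → (Fin n → Bool) → Bool)
    (cost : α → ℕ)
    (step : ∀ t ∈ L, ∀ c' : Circuit n, Extends c c' →
      ∃ c'', Extends c' c'' ∧ c''.size ≤ c'.size + cost t ∧ Avail c'' (F t)) :
    ∀ c0 : Circuit n, Extends c c0 →
      ∃ c', Extends c0 c' ∧ c'.size ≤ c0.size + (L.map cost).sum ∧
        ∀ t ∈ L, Avail c' (F t) := by
  induction L with
  | nil => exact fun c0 h0 => ⟨c0, Extends.refl c0, by simp, by simp⟩
  | cons t L ih =>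
    intro c0 h0
    obtain ⟨c1, he1, hs1, ha1⟩ := step t List.mem_cons_self c0 h0
    obtain ⟨c2, he2, hs2, ha2⟩ :=
      ih (fun u hu => step u (List.mem_cons_of_mem _ hu)) c1 (h0.trans he1)
    refine ⟨c2, he1.trans he2, by simp at hs2 ⊢; omega, ?_⟩
    intro u hu
    rcases List.mem_cons.mp hu with rfl | hu
    · exact ha1.mono he2
    · exact ha2 u hu

lemma existsLiteral (c : Circuit n) (j : Fin n) (b : Bool) :
    ∃ c', Extends c c' ∧ c'.size ≤ c.size + 1 ∧ Avail c' (fun x => x j == b) := by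
  cases b with
  | true =>
    exact ⟨c, Extends.refl c, by omega, (avail_input c j).congr (fun x => by simp)⟩
  | false =>
    obtain ⟨c', he, hs, ha⟩ := existsNot (avail_input c j)
    exact ⟨c', he, by omega, ha.congr (fun x => by cases x j <;> simp)⟩

lemma existsMinterm {m : ℕ} (c : Circuit n) (e : Fin m → Fin n) (a : Fin m → Bool)
    (h1 : Avail c (fun _ => true)) :
    ∃ c', Extends c c' ∧ c'.size ≤ c.size + 2 * m ∧
      Avail c' (fun x => decide (∀ i, x (e i) = a i)) := by
  have step : ∀ t ∈ List.finRange m, ∀ c' : Circuit n, Extends c c' →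
      ∃ c'', Extends c' c'' ∧ c''.size ≤ c'.size + 1 ∧
        Avail c'' ((fun i x => x (e i) == a i) t) := by
    intro t _ c' _
    exact existsLiteral c' (e t) (a t)
  obtain ⟨c1, he1, hs1, ha1⟩ := build_seq c (List.finRange m) (fun i x => x (e i) == a i)
    (fun _ => 1) step c (Extends.refl c)
  obtain ⟨c2, he2, hs2, ha2⟩ := existsBigAnd
    ((List.finRange m).map (fun i x => x (e i) == a i))
    (h1.mono he1)
    (by intro φ hφ
        obtain ⟨i, hi, rfl⟩ := List.mem_map.mp hφ
        exact ha1 i hi)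
  refine ⟨c2, he1.trans he2, ?_, ha2.congr (fun x => ?_)⟩
  · simp at hs1 hs2 ⊢; omega
  · rw [Bool.eq_iff_iff]
    simp [List.all_map, List.all_eq_true, List.mem_finRange, Function.comp]

section Main

variable {n : ℕ} (k s : ℕ)

def rowOf (hk : k ≤ n) (x : Fin n → Bool) : Fin k → Bool := fun i => x (Fin.castLE hk i)

def colOf (hk : k ≤ n) (x : Fin n → Bool) : Fin (n - k) → Bool :=
  fun i => x ⟨k + i, by omega⟩

def glue (hk : k ≤ n) (a : Fin k → Bool) (b : Fin (n - k) → Bool) : Fin n → Bool :=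
  fun i => if h : (i : ℕ) < k then a ⟨i, h⟩ else b ⟨i - k, by omega⟩

lemma glue_row_col (hk : k ≤ n) (x : Fin n → Bool) :
    glue k hk (rowOf k hk x) (colOf k hk x) = x := by
  funext i
  by_cases h : (i : ℕ) < k
  · simp only [glue, h, dif_pos, rowOf]
    congr 1
  · simp only [glue, h, dif_neg, colOf, not_false_iff]
    congr 1
    apply Fin.ext
    simp
    omega

def rho : (Fin k → Bool) ≃ Fin (2 ^ k) :=
  (Equiv.arrowCongr (Equiv.refl (Fin k)) finTwoEquiv.symm).trans finFunctionFinEquiv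

def blockOf (a : Fin k → Bool) : ℕ := ((rho k) a : ℕ) / s

def patT (hk : k ≤ n) (f : (Fin n → Bool) → Bool) (t : ℕ) (b : Fin (n - k) → Bool) :
    (Fin k → Bool) → Bool :=
  fun a => if blockOf k s a = t then f (glue k hk a b) else false

noncomputable def Keys (hk : k ≤ n) (f : (Fin n → Bool) → Bool) (t : ℕ) :
    Finset ((Fin k → Bool) → Bool) := by
  classical exact Finset.univ.image (patT k s hk f t)

lemma block_mem (hs : 0 < s) (a : Fin k → Bool) : blockOf k s a < 2 ^ k / s + 1 := by
  have h1 : ((rho k) a : ℕ) < 2 ^ k := ((rho k) a).isLt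
  have : ((rho k) a : ℕ) / s ≤ 2 ^ k / s := Nat.div_le_div_right (le_of_lt h1)
  unfold blockOf; omega

lemma key_support {hk : k ≤ n} {f} {t : ℕ} {K} (hK : K ∈ Keys k s hk f t)
    {a : Fin k → Bool} (ha : K a = true) : blockOf k s a = t := by
  classical
  obtain ⟨b, -, rfl⟩ := Finset.mem_image.mp hK
  by_contra h
  simp [patT, h] at ha

lemma div_eq_bounds {s : ℕ} (hs : 0 < s) {r t : ℕ} (hb : r / s = t) :
    t * s ≤ r ∧ r < t * s + s := by
  subst hb
  have hdm := Nat.div_add_mod r s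
  have hm : r % s < s := Nat.mod_lt _ hs
  have hc : s * (r / s) = (r / s) * s := Nat.mul_comm _ _
  omega

lemma card_block_le (hs : 0 < s) (t : ℕ) :
    (Finset.univ.filter (fun a : Fin k → Bool => blockOf k s a = t)).card ≤ s := by
  classical
  have := Finset.card_le_card_of_injOn
    (s := Finset.univ.filter (fun a : Fin k → Bool => blockOf k s a = t))
    (f := fun a : Fin k → Bool => ((rho k) a : ℕ) - t * s)
    (t := Finset.range s) ?_ ?_
  · simpa using this
  · intro a ha
    simp only [Finset.mem_coe, Finset.mem_filter] at ha
    have hb := ha.2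
    simp only [blockOf] at hb
    obtain ⟨l1, l2⟩ := div_eq_bounds hs hb
    simp only [Finset.mem_coe, Finset.mem_range]
    omega
  · intro a ha a' ha' hEq
    simp only [Finset.mem_coe, Finset.mem_filter] at ha ha'
    have h1 := ha.2; have h2 := ha'.2
    simp only [blockOf] at h1 h2
    obtain ⟨l1, l2⟩ := div_eq_bounds hs h1
    obtain ⟨l1', l2'⟩ := div_eq_bounds hs h2
    have hval : ((rho k) a : ℕ) = ((rho k) a' : ℕ) := by
      simp only at hEq
      omega
    have : (rho k) a = (rho k) a' := Fin.ext hval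
    exact (rho k).injective this

lemma card_rows_le (hs : 0 < s) {hk : k ≤ n} {f} {t : ℕ} {K} (hK : K ∈ Keys k s hk f t) :
    (Finset.univ.filter (fun a : Fin k → Bool => K a = true)).card ≤ s := by
  classical
  refine le_trans (Finset.card_le_card ?_) (card_block_le k s hs t)
  intro a ha
  simp only [Finset.mem_filter, Finset.mem_univ, true_and] at ha ⊢
  exact key_support k s hK ha

lemma card_keys_le (hs : 0 < s) (hk : k ≤ n) (f) (t : ℕ) :
    (Keys k s hk f t).card ≤ 2 ^ s := by
  classical
  set Φ : ((Fin k → Bool) → Bool) → (Fin s → Bool) := fun K j =>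
    if h : t * s + (j : ℕ) < 2 ^ k then K ((rho k).symm ⟨t * s + j, h⟩) else false with hΦ
  have hinj : Set.InjOn Φ (Keys k s hk f t) := by
    intro K hK K' hK' hEq
    funext a
    by_cases hb : blockOf k s a = t
    · have hdm := Nat.div_add_mod ((rho k) a : ℕ) s
      have hm : ((rho k) a : ℕ) % s < s := Nat.mod_lt _ hs
      simp only [blockOf] at hb
      set j : ℕ := ((rho k) a : ℕ) % s with hj
      have hts : t * s + j = ((rho k) a : ℕ) := by
        rw [hb] at hdm
        have hc : s * t = t * s := Nat.mul_comm s t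
        omega
      have hlt : t * s + j < 2 ^ k := by rw [hts]; exact ((rho k) a).isLt
      have ha' : (rho k).symm ⟨t * s + j, hlt⟩ = a := by
        rw [show (⟨t * s + j, hlt⟩ : Fin (2 ^ k)) = (rho k) a from Fin.ext hts]
        exact (rho k).symm_apply_apply a
      have := congrFun hEq ⟨j, hm⟩
      simp only [hΦ, hlt, dif_pos] at this
      rwa [ha'] at this
    · have e1 : K a = false := by
        cases h : K a
        · rfl
        · exact absurd (key_support k s hK h) hb
      have e2 : K' a = false := by
        cases h : K' a
        · rfl
        · exact absurd (key_support k s hK' h) hb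
      rw [e1, e2]
  calc (Keys k s hk f t).card ≤ (Finset.univ : Finset (Fin s → Bool)).card :=
        Finset.card_le_card_of_injOn Φ (fun _ _ => Finset.mem_univ _) hinj
    _ = 2 ^ s := by simp [Finset.card_univ]

lemma sum_fibers (hk : k ≤ n) (f) (t : ℕ) : by classical exact
    (∑ K ∈ Keys k s hk f t,
      (Finset.univ.filter (fun b : Fin (n - k) → Bool => patT k s hk f t b = K)).card)
      = 2 ^ (n - k) := by
  classical
  have := Finset.card_eq_sum_card_image (patT k s hk f t)
    (Finset.univ : Finset (Fin (n - k) → Bool))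
  rw [Finset.card_univ] at this
  simp only [Keys]
  rw [← this]
  simp

end Main

section Ident

variable {n : ℕ} (k s : ℕ) (hk : k ≤ n) (f : (Fin n → Bool) → Bool)

def RF (K : (Fin k → Bool) → Bool) : (Fin n → Bool) → Bool := fun x => K (rowOf k hk x)

noncomputable def CF (t : ℕ) (K : (Fin k → Bool) → Bool) : (Fin n → Bool) → Bool := by
  classical exact fun x => decide (patT k s hk f t (colOf k hk x) = K)

noncomputable def AF (t : ℕ) (K : (Fin k → Bool) → Bool) : (Fin n → Bool) → Bool :=
  fun x => RF k hk K x && CF k s hk f t K x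

noncomputable def HF (t : ℕ) : (Fin n → Bool) → Bool :=
  fun x => ((Keys k s hk f t).toList).any (fun K => AF k s hk f t K x)

lemma main_identity (hs : 0 < s) (x : Fin n → Bool) :
    f x = (List.range (2 ^ k / s + 1)).any (fun t => HF k s hk f t x) := by
  classical
  rw [Bool.eq_iff_iff, List.any_eq_true]
  constructor
  · intro hf
    refine ⟨blockOf k s (rowOf k hk x), List.mem_range.mpr (block_mem k s hs _), ?_⟩
    rw [HF, List.any_eq_true]
    refine ⟨patT k s hk f (blockOf k s (rowOf k hk x)) (colOf k hk x), ?_, ?_⟩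
    · exact Finset.mem_toList.mpr (Finset.mem_image_of_mem _ (Finset.mem_univ _))
    · rw [AF, RF, CF]
      simp only [Bool.and_eq_true, decide_eq_true_eq]
      refine ⟨?_, trivial⟩
      rw [patT]
      simp only [if_pos rfl]
      rw [glue_row_col]
      exact hf
  · rintro ⟨t, -, ht⟩
    rw [HF, List.any_eq_true] at ht
    obtain ⟨K, -, hK⟩ := ht
    rw [AF, RF, CF] at hK
    simp only [Bool.and_eq_true, decide_eq_true_eq] at hK
    obtain ⟨h1, h2⟩ := hK
    rw [← h2, patT] at h1
    by_cases hb : blockOf k s (rowOf k hk x) = t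
    · rw [if_pos hb, glue_row_col] at h1
      exact h1
    · rw [if_neg hb] at h1
      exact absurd h1 (by simp)

end Ident

lemma sum_map_const' {α : Type*} (L : List α) (m : ℕ) :
    (L.map (fun _ => m)).sum = L.length * m := by
  induction L with
  | nil => simp
  | cons a L ih => simp [ih, Nat.succ_mul]; omega

lemma sum_toList_map {α : Type*} (X : Finset α) (g : α → ℕ) :
    (X.toList.map g).sum = ∑ a ∈ X, g a := by
  rw [Finset.sum, ← Multiset.coe_toList X.val, Multiset.map_coe, Multiset.sum_coe]
  rfl

lemma any_map' {α β : Type*} (L : List α) (g : α → β) (p : β → Bool) :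
    (L.map g).any p = L.any (fun a => p (g a)) := by
  induction L with
  | nil => rfl
  | cons a L ih => simp only [List.map_cons, List.any_cons, ih]

theorem buildMain {n : ℕ} (k s : ℕ) (hk : k ≤ n) (hs : 0 < s) (hn : 0 < n)
    (f : (Fin n → Bool) → Bool) :
    ∃ C : Circuit n, C.Computes f ∧
      C.size ≤ 5 + 2 * k * 2 ^ k + 2 * (n - k) * 2 ^ (n - k)
        + (2 ^ k / s + 1) * (2 ^ s * (s + 2) + 2 ^ (n - k)) + (2 ^ k / s + 1) + 1 := by
  classical
  set p := 2 ^ k / s + 1 with hp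
  let c0 : Circuit n := ⟨0, fun i => i.elim0⟩
  obtain ⟨cF, heF, hsF, haF⟩ := existsConst hn c0 false
  obtain ⟨cT, heT, hsT, haT⟩ := existsConst hn cF true
  -- row minterms
  set MR : (Fin k → Bool) → (Fin n → Bool) → Bool :=
    fun a x => decide (∀ i, x (Fin.castLE hk i) = a i) with hMRdef
  obtain ⟨cR, heR, hsR, haR⟩ := build_seq cT (Finset.univ.toList (α := Fin k → Bool)) MR
    (fun _ => 2 * k)
    (fun a _ c' he' => existsMinterm c' (Fin.castLE hk) a (haT.mono he')) cT (Extends.refl cT)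
  -- column minterms
  set e2 : Fin (n - k) → Fin n := (fun i => ⟨k + i, by omega⟩) with he2def
  set MC : (Fin (n - k) → Bool) → (Fin n → Bool) → Bool :=
    fun b x => decide (∀ i, x (e2 i) = b i) with hMCdef
  obtain ⟨cC, heC, hsC, haC⟩ := build_seq cR (Finset.univ.toList (α := Fin (n - k) → Bool)) MC
    (fun _ => 2 * (n - k))
    (fun b _ c' he' => existsMinterm c' e2 b (haT.mono (heR.trans he'))) cR (Extends.refl cR)
  have haF2 : Avail cC (fun _ => false) := haF.mono ((heT.trans heR).trans heC)
  -- per-block stage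
  have hstep : ∀ t ∈ List.range p, ∀ c' : Circuit n, Extends cC c' →
      ∃ c'', Extends c' c'' ∧ c''.size ≤ c'.size + (2 ^ s * (s + 2) + 2 ^ (n - k)) ∧
        Avail c'' (HF k s hk f t) := by
    intro t _ c' he'
    have hMR : ∀ a, Avail c' (MR a) :=
      fun a => (haR a (by simp)).mono (heC.trans he')
    have hMC : ∀ b, Avail c' (MC b) := fun b => (haC b (by simp)).mono he'
    have hF0 : Avail c' (fun _ => false) := haF2.mono he'
    have hKcard : (Keys k s hk f t).card ≤ 2 ^ s := card_keys_le k s hs hk f t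
    -- stage R
    have stepR : ∀ K ∈ (Keys k s hk f t).toList, ∀ c1 : Circuit n, Extends c' c1 →
        ∃ c2, Extends c1 c2 ∧ c2.size ≤ c1.size + s ∧ Avail c2 (RF k hk K) := by
      intro K hKmem c1 he1
      have hK : K ∈ Keys k s hk f t := Finset.mem_toList.mp hKmem
      set LA := (Finset.univ.filter (fun a : Fin k → Bool => K a = true)).toList with hLA
      obtain ⟨c2, he2, hs2, ha2⟩ := existsBigOr (c := c1) (LA.map MR)
        ((hF0.mono he1))
        (fun φ hφ => by
          obtain ⟨a, _, rfl⟩ := List.mem_map.mp hφ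
          exact (hMR a).mono he1)
      refine ⟨c2, he2, ?_, ha2.congr (fun x => ?_)⟩
      · have hlen : (LA.map MR).length ≤ s := by
          rw [List.length_map, hLA, Finset.length_toList]
          exact card_rows_le k s hs hK
        omega
      · rw [Bool.eq_iff_iff, List.any_eq_true]
        constructor
        · rintro ⟨φ, hφ, hx⟩
          obtain ⟨a, ha, rfl⟩ := List.mem_map.mp hφ
          have hrow : rowOf k hk x = a := by
            funext i; exact (of_decide_eq_true hx) i
          have haK : K a = true := (Finset.mem_filter.mp (Finset.mem_toList.mp ha)).2
          rw [RF, hrow]; exact haK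
        · intro hKx
          refine ⟨MR (rowOf k hk x), List.mem_map_of_mem (f := MR) ?_, ?_⟩
          · rw [hLA, Finset.mem_toList, Finset.mem_filter]
            exact ⟨Finset.mem_univ _, hKx⟩
          · exact decide_eq_true (fun i => rfl)
    obtain ⟨cRt, heRt, hsRt, haRt⟩ := build_seq c' (Keys k s hk f t).toList (RF k hk)
      (fun _ => s) stepR c' (Extends.refl c')
    -- stage C
    have stepC : ∀ K ∈ (Keys k s hk f t).toList, ∀ c1 : Circuit n, Extends cRt c1 →
        ∃ c2, Extends c1 c2 ∧ c2.size ≤ c1.size +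
            (Finset.univ.filter (fun b : Fin (n - k) → Bool => patT k s hk f t b = K)).card ∧
          Avail c2 (CF k s hk f t K) := by
      intro K hKmem c1 he1
      set LB := (Finset.univ.filter
        (fun b : Fin (n - k) → Bool => patT k s hk f t b = K)).toList with hLB
      obtain ⟨c2, he2, hs2, ha2⟩ := existsBigOr (c := c1) (LB.map MC)
        (hF0.mono (heRt.trans he1))
        (fun φ hφ => by
          obtain ⟨b, _, rfl⟩ := List.mem_map.mp hφ
          exact (hMC b).mono (heRt.trans he1))
      refine ⟨c2, he2, ?_, ha2.congr (fun x => ?_)⟩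
      · have hlen : (LB.map MC).length =
            (Finset.univ.filter
              (fun b : Fin (n - k) → Bool => patT k s hk f t b = K)).card := by
          rw [List.length_map, hLB, Finset.length_toList]
        omega
      · rw [Bool.eq_iff_iff, List.any_eq_true, CF]
        simp only [decide_eq_true_eq]
        constructor
        · rintro ⟨φ, hφ, hx⟩
          obtain ⟨b, hb, rfl⟩ := List.mem_map.mp hφ
          have hcol : colOf k hk x = b := by
            funext i; exact (of_decide_eq_true hx) i
          have hbK : patT k s hk f t b = K :=
            (Finset.mem_filter.mp (Finset.mem_toList.mp hb)).2
          rw [hcol]; exact hbK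
        · intro hKx
          refine ⟨MC (colOf k hk x), List.mem_map_of_mem (f := MC) ?_, ?_⟩
          · rw [hLB, Finset.mem_toList, Finset.mem_filter]
            exact ⟨Finset.mem_univ _, hKx⟩
          · exact decide_eq_true (fun i => rfl)
    obtain ⟨cCt, heCt, hsCt, haCt⟩ := build_seq cRt (Keys k s hk f t).toList (CF k s hk f t)
      (fun K => (Finset.univ.filter
        (fun b : Fin (n - k) → Bool => patT k s hk f t b = K)).card)
      stepC cRt (Extends.refl cRt)
    -- stage A : conjunctions
    have stepA : ∀ K ∈ (Keys k s hk f t).toList, ∀ c1 : Circuit n, Extends cCt c1 →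
        ∃ c2, Extends c1 c2 ∧ c2.size ≤ c1.size + 1 ∧ Avail c2 (AF k s hk f t K) := by
      intro K hKmem c1 he1
      have h1 : Avail c1 (RF k hk K) := ((haRt K hKmem).mono heCt).mono he1
      have h2 : Avail c1 (CF k s hk f t K) := (haCt K hKmem).mono he1
      obtain ⟨c2, he2, hs2, ha2⟩ := existsAnd h1 h2
      exact ⟨c2, he2, le_of_eq hs2, ha2⟩
    obtain ⟨cAt, heAt, hsAt, haAt⟩ := build_seq cCt (Keys k s hk f t).toList (AF k s hk f t)
      (fun _ => 1) stepA cCt (Extends.refl cCt)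
    -- big or over keys
    obtain ⟨cHt, heHt, hsHt, haHt⟩ := existsBigOr (c := cAt)
      ((Keys k s hk f t).toList.map (AF k s hk f t))
      (hF0.mono ((heRt.trans heCt).trans heAt))
      (fun φ hφ => by
        obtain ⟨K, hKm, rfl⟩ := List.mem_map.mp hφ
        exact haAt K hKm)
    refine ⟨cHt, ((heRt.trans heCt).trans heAt).trans heHt, ?_,
      haHt.congr (fun x => ?_)⟩
    · -- size accounting for this stage
      have e1 : ((Keys k s hk f t).toList.map (fun _ => s)).sum =
          (Keys k s hk f t).card * s := by
        rw [sum_map_const', Finset.length_toList]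
      have e2' : ((Keys k s hk f t).toList.map (fun K =>
          (Finset.univ.filter
            (fun b : Fin (n - k) → Bool => patT k s hk f t b = K)).card)).sum
          = 2 ^ (n - k) := by
        rw [sum_toList_map]
        exact sum_fibers k s hk f t
      have e3 : ((Keys k s hk f t).toList.map (fun _ => 1)).sum =
          (Keys k s hk f t).card := by
        rw [sum_map_const', Finset.length_toList]; omega
      have e4 : ((Keys k s hk f t).toList.map (AF k s hk f t)).length =
          (Keys k s hk f t).card := by
        rw [List.length_map, Finset.length_toList]
      have hmul : (Keys k s hk f t).card * s ≤ 2 ^ s * s :=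
        Nat.mul_le_mul_right s hKcard
      rw [e1] at hsRt; rw [e2'] at hsCt; rw [e3] at hsAt; rw [e4] at hsHt
      have : 2 ^ s * (s + 2) = 2 ^ s * s + 2 ^ s + 2 ^ s := by ring
      omega
    · rw [HF, any_map']
  obtain ⟨cH, heH, hsH, haH⟩ := build_seq cC (List.range p) (HF k s hk f)
    (fun _ => 2 ^ s * (s + 2) + 2 ^ (n - k)) hstep cC (Extends.refl cC)
  -- final big or
  obtain ⟨cO, heO, hsO, haO⟩ := existsBigOr (c := cH)
    ((List.range p).map (HF k s hk f))
    (haF2.mono heH)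
    (fun φ hφ => by
      obtain ⟨t, htm, rfl⟩ := List.mem_map.mp hφ
      exact haH t htm)
  have hfAvail : Avail cO f := haO.congr (fun x => by
    rw [any_map']
    exact (main_identity k s hk f hs x).symm)
  obtain ⟨w, hw⟩ := hfAvail.wire
  refine ⟨cO.snoc (.and w w), ⟨Nat.succ_pos _, fun x => ?_⟩, ?_⟩
  · have h2 : (GateDesc.and w w).eval x (fun j => cO.evalGate x j j.isLt) = f x := by
      simp only [GateDesc.eval]
      rw [hw x]
      exact Bool.and_self _
    exact (evalGate_snoc_last cO (.and w w) x (Nat.lt_succ_self _)).trans h2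
  · -- size accounting
    have hS : (cO.snoc (.and w w)).size = cO.size + 1 := rfl
    have l1 : ((Finset.univ.toList (α := Fin k → Bool)).map (fun _ => 2 * k)).sum =
        2 ^ k * (2 * k) := by
      rw [sum_map_const', Finset.length_toList, Finset.card_univ]
      congr 1
      rw [Fintype.card_fun]
      simp
    have l2 : ((Finset.univ.toList (α := Fin (n - k) → Bool)).map
        (fun _ => 2 * (n - k))).sum = 2 ^ (n - k) * (2 * (n - k)) := by
      rw [sum_map_const', Finset.length_toList, Finset.card_univ]
      congr 1
      rw [Fintype.card_fun]
      simp
    have l3 : ((List.range p).map (fun _ => 2 ^ s * (s + 2) + 2 ^ (n - k))).sum =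
        p * (2 ^ s * (s + 2) + 2 ^ (n - k)) := by
      rw [sum_map_const', List.length_range]
    have l4 : ((List.range p).map (HF k s hk f)).length = p := by
      rw [List.length_map, List.length_range]
    rw [l1] at hsR; rw [l2] at hsC; rw [l3] at hsH; rw [l4] at hsO
    have hc0 : c0.size = 0 := rfl
    have htriv1 : 2 ^ k * (2 * k) = 2 * k * 2 ^ k := by ring
    have htriv2 : 2 ^ (n - k) * (2 * (n - k)) = 2 * (n - k) * 2 ^ (n - k) := by ring
    omega

open Filter in

lemma clog_le_eventually {δ : ℝ} (hδ : 0 < δ) :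
    ∀ᶠ n : ℕ in Filter.atTop, (Nat.clog 2 n : ℝ) ≤ δ * n := by
  have hlog2 : (0:ℝ) < Real.log 2 := Real.log_pos one_lt_two
  have h2 : ∀ᶠ x : ℝ in Filter.atTop, ‖Real.log x‖ ≤ (δ * Real.log 2 / 2) * ‖id x‖ :=
    Real.isLittleO_log_id_atTop.def (by positivity)
  have h3 : ∀ᶠ n : ℕ in Filter.atTop, ‖Real.log (n : ℝ)‖ ≤ (δ * Real.log 2 / 2) * ‖((n:ℝ))‖ :=
    tendsto_natCast_atTop_atTop.eventually h2
  have h4 : ∀ᶠ n : ℕ in Filter.atTop, (2:ℕ) ≤ n := Filter.eventually_ge_atTop 2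
  have h5 : ∀ᶠ n : ℕ in Filter.atTop, (2/δ : ℝ) ≤ (n:ℝ) :=
    tendsto_natCast_atTop_atTop.eventually (Filter.eventually_ge_atTop _)
  filter_upwards [h3, h4, h5] with n hlog hn2 hnδ
  set c := Nat.clog 2 n with hc
  have hc1 : 0 < c := Nat.clog_pos one_lt_two hn2
  have hpow : (2:ℕ) ^ (c - 1) < n := Nat.pow_pred_clog_lt_self one_lt_two (by omega)
  have hpowR : (2:ℝ) ^ ((c : ℕ) - 1) < (n:ℝ) := by exact_mod_cast hpow
  have hnR : (1:ℝ) ≤ (n:ℝ) := by exact_mod_cast Nat.one_le_of_lt hn2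
  have hlogn : ((c:ℝ) - 1) * Real.log 2 ≤ Real.log n := by
    have h := Real.log_le_log (by positivity) hpowR.le
    rw [Real.log_pow] at h
    have : ((c - 1 : ℕ) : ℝ) = (c:ℝ) - 1 := by
      have : 1 ≤ c := hc1
      push_cast [Nat.cast_sub this]
      ring
    rw [this] at h
    exact h
  have habs : Real.log (n:ℝ) ≤ (δ * Real.log 2 / 2) * (n:ℝ) := by
    have h1 : ‖Real.log (n:ℝ)‖ = Real.log (n:ℝ) := by
      rw [Real.norm_eq_abs, abs_of_nonneg (Real.log_nonneg hnR)]
    have h2' : ‖((n:ℝ))‖ = (n:ℝ) := by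
      rw [Real.norm_eq_abs, abs_of_nonneg (by positivity)]
    rw [h1, h2'] at hlog
    exact hlog
  -- (c-1) log 2 ≤ (δ log2/2) n  => c ≤ 1 + (δ/2) n ≤ δ n
  have hkey : (c:ℝ) - 1 ≤ (δ / 2) * n := by
    have := hlogn.trans habs
    have h2' := hlog2
    nlinarith
  have hone : (1:ℝ) ≤ (δ/2) * n := by
    have : (2/δ : ℝ) ≤ n := hnδ
    have hδ' : (0:ℝ) < δ := hδ
    rw [div_le_iff₀ hδ'] at this
    nlinarith
  linarith



lemma numeric_final (ε nR cR sR mR kR D A B2 S2 C8 T Z : ℝ)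
    (hε : 0 < ε)
    (r1 : nR^4 ≤ A) (r2 : A ≤ 16*nR^4) (r3 : nR^8 ≤ C8)
    (r4 : D*sR ≤ A) (r5 : nR ≤ 2*sR) (r6 : A*B2 = T) (r7 : C8*S2 = T)
    (rs : sR ≤ nR) (rm : mR ≤ nR) (rcn : cR ≤ nR) (rc0 : 0 ≤ cR)
    (rseq : sR = nR - 8*cR) (rkeq : kR = 4*cR)
    (rn2 : 2 ≤ nR) (hB20 : 0 ≤ B2) (hS20 : 0 ≤ S2) (hTpos : 0 < T)
    (hD0 : 0 ≤ D) (hm0 : 0 ≤ mR) (hspos : 0 < sR)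
    (rF5 : (1+ε/2)*(8*cR) ≤ (ε/2)*nR)
    (rPoly : 200*nR^8 ≤ T)
    (rEps : 200 ≤ ε*nR^2)
    (hZ : Z ≤ D*B2 + (6 + 2*kR*A + 2*mR*B2 + (D+1)*(S2*(sR+2)) + B2 + (D+1))) :
    Z ≤ (1+ε)*T/nR := by
  have rn1 : (1:ℝ) ≤ nR := by linarith
  have npos : (0:ℝ) < nR := by linarith
  have hn3 : (0:ℝ) ≤ nR^3 := by positivity
  have hA0 : (0:ℝ) ≤ A := le_trans (by positivity) r1
  have hone3 : (1:ℝ) ≤ nR^3 := one_le_pow₀ rn1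
  have h38 : nR^3 ≤ nR^8 := pow_le_pow_right₀ rn1 (by norm_num)
  have h68 : nR^6 ≤ nR^8 := pow_le_pow_right₀ rn1 (by norm_num)
  have h78 : nR^7 ≤ nR^8 := pow_le_pow_right₀ rn1 (by norm_num)
  set E : ℝ := 6 + 2*kR*A + 2*mR*B2 + (D+1)*(S2*(sR+2)) + B2 + (D+1) with hE
  have hna : nR ≤ (1+ε/2)*sR := by
    rw [rseq]
    nlinarith [rF5]
  have T1 : D*B2*nR ≤ (1+ε/2)*T := by
    have e1 : D*B2*nR ≤ D*B2*((1+ε/2)*sR) :=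
      mul_le_mul_of_nonneg_left hna (by positivity)
    have e2 : D*sR*B2 ≤ A*B2 := mul_le_mul_of_nonneg_right r4 hB20
    calc D*B2*nR ≤ D*B2*((1+ε/2)*sR) := e1
      _ = (1+ε/2)*(D*sR*B2) := by ring
      _ ≤ (1+ε/2)*(A*B2) := mul_le_mul_of_nonneg_left e2 (by linarith)
      _ = (1+ε/2)*T := by rw [r6]
  have T2 : B2*nR^4 ≤ T := by
    calc B2*nR^4 ≤ B2*A := mul_le_mul_of_nonneg_left r1 hB20
      _ = T := by rw [mul_comm]; exact r6
  have T3 : S2*nR^8 ≤ T := by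
    calc S2*nR^8 ≤ S2*C8 := mul_le_mul_of_nonneg_left r3 hS20
      _ = T := by rw [mul_comm]; exact r7
  have T4 : D ≤ 32*nR^3 := by
    have t4a : D*nR ≤ D*(2*sR) := mul_le_mul_of_nonneg_left r5 hD0
    have h4' : D*nR ≤ 32*nR^3*nR := by
      calc D*nR ≤ D*(2*sR) := t4a
        _ = 2*(D*sR) := by ring
        _ ≤ 2*A := by linarith
        _ ≤ 32*nR^4 := by linarith
        _ = 32*nR^3*nR := by ring
    exact le_of_mul_le_mul_right h4' npos
  have hD1 : D+1 ≤ 33*nR^3 := by linarith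
  have S : E*nR^3 ≤ 100*T := by
    have b1 : 2*kR*A ≤ 128*nR^5 := by
      have h := mul_le_mul rcn r2 hA0 (by positivity)
      calc 2*kR*A = 8*(cR*A) := by rw [rkeq]; ring
        _ ≤ 8*(nR*(16*nR^4)) := by linarith
        _ = 128*nR^5 := by ring
    have b1' : (2*kR*A)*nR^3 ≤ 128*nR^8 := by
      calc (2*kR*A)*nR^3 ≤ (128*nR^5)*nR^3 := mul_le_mul_of_nonneg_right b1 hn3
        _ = 128*nR^8 := by ring
    have hmn : mR*nR^3 ≤ nR^4 := by
      calc mR*nR^3 ≤ nR*nR^3 := mul_le_mul_of_nonneg_right rm hn3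
        _ = nR^4 := by ring
    have b2 : (2*mR*B2)*nR^3 ≤ 2*T := by
      calc (2*mR*B2)*nR^3 = 2*((mR*nR^3)*B2) := by ring
        _ ≤ 2*(nR^4*B2) := by
            have := mul_le_mul_of_nonneg_right hmn hB20
            linarith
        _ = 2*(B2*nR^4) := by ring
        _ ≤ 2*T := by linarith
    have b3 : ((D+1)*(S2*(sR+2)))*nR^3 ≤ 66*T := by
      have hs2 : sR+2 ≤ 2*nR := by linarith
      have hq1 : (D+1)*(S2*(sR+2))*nR^3 ≤ (33*nR^3)*(S2*(2*nR))*nR^3 := by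
        have e1 : S2*(sR+2) ≤ S2*(2*nR) := mul_le_mul_of_nonneg_left hs2 hS20
        have e2 : (0:ℝ) ≤ S2*(sR+2) := by positivity
        have e3 := mul_le_mul hD1 e1 e2 (by positivity)
        exact mul_le_mul_of_nonneg_right e3 hn3
      have hq2 : (33*nR^3)*(S2*(2*nR))*nR^3 = 66*(S2*nR^7) := by ring
      have hq3 : S2*nR^7 ≤ T := by
        calc S2*nR^7 ≤ S2*nR^8 := mul_le_mul_of_nonneg_left h78 hS20
          _ ≤ T := T3
      rw [hq2] at hq1
      linarith
    have b4 : B2*nR^3 ≤ T := by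
      calc B2*nR^3 ≤ B2*nR^4 := mul_le_mul_of_nonneg_left
            (pow_le_pow_right₀ rn1 (by norm_num)) hB20
        _ ≤ T := T2
    have b5 : (D+1)*nR^3 ≤ 33*nR^6 := by
      calc (D+1)*nR^3 ≤ (33*nR^3)*nR^3 := mul_le_mul_of_nonneg_right hD1 hn3
        _ = 33*nR^6 := by ring
    have bpoly : 6*nR^3 + 128*nR^8 + 33*nR^6 ≤ T := by
      have : 6*nR^3 ≤ 6*nR^8 := by linarith
      have : 33*nR^6 ≤ 33*nR^8 := by linarith
      linarith
    have hexp : E*nR^3 = 6*nR^3 + (2*kR*A)*nR^3 + (2*mR*B2)*nR^3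
        + ((D+1)*(S2*(sR+2)))*nR^3 + B2*nR^3 + (D+1)*nR^3 := by rw [hE]; ring
    rw [hexp]
    linarith
  have restBound : E*nR ≤ (ε/2)*T := by
    have h100 : (100:ℝ) ≤ (ε/2)*nR^2 := by linarith
    have hB : 100*T ≤ (ε/2)*nR^2*T := by
      have := mul_le_mul_of_nonneg_right h100 hTpos.le
      linarith
    have key : (E*nR)*nR^2 ≤ ((ε/2)*T)*nR^2 := by
      calc (E*nR)*nR^2 = E*nR^3 := by ring
        _ ≤ 100*T := S
        _ ≤ (ε/2)*nR^2*T := hB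
        _ = ((ε/2)*T)*nR^2 := by ring
    exact le_of_mul_le_mul_right key (by positivity)
  rw [le_div_iff₀ npos]
  have hZ' : Z ≤ D*B2 + E := by rw [hE]; exact hZ
  calc Z*nR ≤ (D*B2 + E)*nR := mul_le_mul_of_nonneg_right hZ' npos.le
    _ = D*B2*nR + E*nR := by ring
    _ ≤ (1+ε/2)*T + (ε/2)*T := add_le_add T1 restBound
    _ = (1+ε)*T := by ring


open Filter in
theorem stmt_12 (ε : ℝ) (hε : 0 < ε) :
    ∃ N : ℕ, ∀ n : ℕ, N ≤ n → ∀ f : (Fin n → Bool) → Bool,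
      ∃ C : Circuit n, C.Computes f ∧ (C.size : ℝ) ≤ (1 + ε) * 2 ^ n / n := by
  have hε2 : (0:ℝ) < ε / 2 := by linarith
  have hδ2pos : (0:ℝ) < (ε/2) / (8 * (1 + ε/2)) := by positivity
  have E1 := clog_le_eventually (show (0:ℝ) < 1/16 by norm_num)
  have E2 := clog_le_eventually hδ2pos
  have E3 : ∀ᶠ n : ℕ in Filter.atTop, ((n:ℝ))^8 / 2^n < 1/200 :=
    (tendsto_pow_const_div_const_pow_of_one_lt 8 (one_lt_two)).eventually_lt_const (by norm_num)
  have E4 : ∀ᶠ n : ℕ in Filter.atTop, (200/ε : ℝ) ≤ (n:ℝ) :=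
    tendsto_natCast_atTop_atTop.eventually (Filter.eventually_ge_atTop _)
  have E5 : ∀ᶠ n : ℕ in Filter.atTop, 2 ≤ n := Filter.eventually_ge_atTop 2
  obtain ⟨N, hN⟩ := Filter.eventually_atTop.mp (E1.and (E2.and (E3.and (E4.and E5))))
  refine ⟨N, fun n hn f => ?_⟩
  obtain ⟨h1, h2, h3, h4, h5⟩ := hN n hn
  set c := Nat.clog 2 n with hcdef
  have h16 : 16 * c ≤ n := by
    have : (16 * c : ℝ) ≤ (n:ℝ) := by linarith
    exact_mod_cast this
  have hn2 : 2 ≤ n := h5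
  have hcpos : 0 < c := Nat.clog_pos one_lt_two hn2
  have hle : n ≤ 2 ^ c := Nat.le_pow_clog one_lt_two n
  have hlt : 2 ^ (c - 1) < n := Nat.pow_pred_clog_lt_self one_lt_two (by omega)
  have h2c : 2 ^ c ≤ 2 * n := by
    have hcc : 2 ^ c = 2 * 2 ^ (c - 1) := by
      rw [← pow_succ']
      congr 1
      omega
    omega
  set k := 4 * c with hkdef
  set s := n - 8 * c with hsdef
  have hk : k ≤ n := by omega
  have hs : 0 < s := by omega
  set m := n - k with hmdef
  obtain ⟨C, hC, hsize⟩ := buildMain k s hk hs (by omega) f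
  refine ⟨C, hC, ?_⟩
  -- nat-level inequalities
  have nat1 : n ^ 4 ≤ 2 ^ k := by
    calc n ^ 4 ≤ (2 ^ c) ^ 4 := Nat.pow_le_pow_left hle 4
      _ = 2 ^ k := by rw [← pow_mul]; congr 1; omega
  have nat2 : 2 ^ k ≤ 16 * n ^ 4 := by
    calc 2 ^ k = (2 ^ c) ^ 4 := by rw [← pow_mul]; congr 1; omega
      _ ≤ (2 * n) ^ 4 := Nat.pow_le_pow_left h2c 4
      _ = 16 * n ^ 4 := by ring
  have nat3 : n ^ 8 ≤ 2 ^ (8 * c) := by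
    calc n ^ 8 ≤ (2 ^ c) ^ 8 := Nat.pow_le_pow_left hle 8
      _ = 2 ^ (8 * c) := by rw [← pow_mul]; congr 1; omega
  have nat4 : (2 ^ k / s) * s ≤ 2 ^ k := Nat.div_mul_le_self _ _
  have nat5 : n ≤ 2 * s := by omega
  have nat6 : 2 ^ k * 2 ^ m = 2 ^ n := by rw [← pow_add]; congr 1; omega
  have nat7 : 2 ^ (8 * c) * 2 ^ s = 2 ^ n := by rw [← pow_add]; congr 1; omega
  -- real versions
  set rD : ℝ := ((2 ^ k / s : ℕ) : ℝ) with hrD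
  have rDnn : (0:ℝ) ≤ rD := by positivity
  have r1 : ((n:ℝ)) ^ 4 ≤ 2 ^ k := by exact_mod_cast nat1
  have r2 : (2:ℝ) ^ k ≤ 16 * (n:ℝ) ^ 4 := by exact_mod_cast nat2
  have r3 : ((n:ℝ)) ^ 8 ≤ 2 ^ (8 * c) := by exact_mod_cast nat3
  have r4 : rD * (s:ℝ) ≤ 2 ^ k := by rw [hrD]; exact_mod_cast nat4
  have r5 : ((n:ℝ)) ≤ 2 * (s:ℝ) := by exact_mod_cast nat5
  have r6 : (2:ℝ) ^ k * 2 ^ m = 2 ^ n := by exact_mod_cast nat6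
  have r7 : (2:ℝ) ^ (8 * c) * 2 ^ s = 2 ^ n := by exact_mod_cast nat7
  have rs : ((s:ℝ)) ≤ (n:ℝ) := by exact_mod_cast Nat.sub_le n (8 * c)
  have rm : ((m:ℝ)) ≤ (n:ℝ) := by exact_mod_cast Nat.sub_le n k
  have rcn : ((c:ℝ)) ≤ (n:ℝ) := by
    have : c ≤ n := by omega
    exact_mod_cast this
  have rc0 : (0:ℝ) ≤ (c:ℝ) := by positivity
  have rseq : ((s:ℝ)) = (n:ℝ) - 8 * (c:ℝ) := by
    have h' : (s : ℕ) + 8 * c = n := by omega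
    have h'' := congrArg (fun t : ℕ => (t:ℝ)) h'
    push_cast at h''
    linarith
  have rkeq : ((k:ℝ)) = 4 * (c:ℝ) := by rw [hkdef]; push_cast; ring
  have rn2 : (2:ℝ) ≤ (n:ℝ) := by exact_mod_cast hn2
  have npos : (0:ℝ) < (n:ℝ) := by linarith
  have h2npos : (0:ℝ) < (2:ℝ) ^ n := by positivity
  have rspos : (0:ℝ) < (s:ℝ) := by exact_mod_cast hs
  have rF5 : (1 + ε/2) * (8 * (c:ℝ)) ≤ (ε/2) * (n:ℝ) := by
    have hd : (0:ℝ) < 8 * (1 + ε/2) := by linarith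
    have h2' : (c:ℝ) ≤ (ε/2) / (8 * (1 + ε/2)) * n := h2
    have h2'' := mul_le_mul_of_nonneg_left h2' hd.le
    calc (1 + ε/2) * (8 * (c:ℝ)) = (8 * (1 + ε/2)) * (c:ℝ) := by ring
      _ ≤ (8 * (1 + ε/2)) * ((ε/2) / (8 * (1 + ε/2)) * n) := h2''
      _ = (ε/2) * n := by field_simp
  have rPoly : 200 * ((n:ℝ)) ^ 8 ≤ 2 ^ n := by
    rw [div_lt_iff₀ h2npos] at h3
    linarith
  have rEps : 200 ≤ ε * ((n:ℝ)) ^ 2 := by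
    have h4' : (200:ℝ) ≤ ε * n := by
      rw [div_le_iff₀ hε] at h4
      linarith
    have hq : ε * (n:ℝ) * 1 ≤ ε * (n:ℝ) * (n:ℝ) := by
      have : (1:ℝ) ≤ (n:ℝ) := by linarith
      exact mul_le_mul_of_nonneg_left this (by positivity)
    have : ε * (n:ℝ) ^ 2 = ε * (n:ℝ) * (n:ℝ) := by ring
    linarith
  -- cast the size bound
  have hsplit : (C.size : ℝ) ≤ rD * 2 ^ m +
      (6 + 2 * (k:ℝ) * 2 ^ k + 2 * (m:ℝ) * 2 ^ m + (rD + 1) * (2 ^ s * ((s:ℝ) + 2))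
        + 2 ^ m + (rD + 1)) := by
    have hq : (C.size : ℝ) ≤ ((5 + 2 * k * 2 ^ k + 2 * (n - k) * 2 ^ (n - k)
        + (2 ^ k / s + 1) * (2 ^ s * (s + 2) + 2 ^ (n - k)) + (2 ^ k / s + 1) + 1 : ℕ) : ℝ) :=
      Nat.cast_le.mpr hsize
    rw [← hmdef] at hq
    push_cast at hq
    rw [← hrD] at hq
    calc (C.size : ℝ) ≤ _ := hq
      _ = rD * 2 ^ m + (6 + 2 * (k:ℝ) * 2 ^ k + 2 * (m:ℝ) * 2 ^ m
          + (rD + 1) * (2 ^ s * ((s:ℝ) + 2)) + 2 ^ m + (rD + 1)) := by ring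
  exact numeric_final ε (n:ℝ) (c:ℝ) (s:ℝ) (m:ℝ) (k:ℝ) rD ((2:ℝ)^k) ((2:ℝ)^m)
    ((2:ℝ)^s) ((2:ℝ)^(8*c)) ((2:ℝ)^n) (C.size : ℝ) hε r1 r2 r3 r4 r5 r6 r7 rs rm rcn rc0
    rseq rkeq rn2 (by positivity) (by positivity) h2npos rDnn (by positivity) rspos
    rF5 rPoly rEps hsplit
end
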